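/- Let s ≥ 1, t ≥ 2 and z > t·s be natural numbers, let 1 ≤ λ ≤ z−1, set θ = t·s + λ and q = min(⌊(z−1)/λ⌋, t−1). Define P_CA = {j + s·i : 0 ≤ j ≤ s−1, 0 ≤ i ≤ t−1}, P_CB = {(s−1−k) + θ·l : 0 ≤ k ≤ s−1, 0 ≤ l ≤ t−1}, P_SA = (⋃_{l=0}^{q−1} {t·s + θ·l + w : 0 ≤ w ≤ λ−1}) ∪ {t·s + θ·q + u : 0 ≤ u ≤ z−1−q·λ}, and P_SB = {t·s + θ·(t−1) + r : 0 ≤ r ≤ z−1}. Then the sumset (P_CA ∪ P_SA) + (P_CB ∪ P_SB) has cardinality (q+2)·t·s + θ·(t−1) + 2z − 1. -/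
import Mathlib


open Pointwise

/-- AGE-CMPC worker count in the region z > ts, 0 < λ < z
(θ = t·s + λ, q = min(⌊(z−1)/λ⌋, t−1)):
|(P_CA ∪ P_SA) + (P_CB ∪ P_SB)| = (q+2)·ts + θ(t−1) + 2z − 1 = Υ₄(λ). -/
theorem age_workers_upsilon4 (s t z lam : ℕ) (hs : 1 ≤ s) (ht : 2 ≤ t)
    (hz : t * s < z) (hlam1 : 1 ≤ lam) (hlam2 : lam ≤ z - 1) :
    (({n : ℕ | ∃ j i, j < s ∧ i < t ∧ n = j + s * i} ∪
      ({n : ℕ | ∃ l w, l < min ((z - 1) / lam) (t - 1) ∧ w < lam ∧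
          n = t * s + (t * s + lam) * l + w} ∪
       {n : ℕ | ∃ u, u ≤ z - 1 - (min ((z - 1) / lam) (t - 1)) * lam ∧
          n = t * s + (t * s + lam) * (min ((z - 1) / lam) (t - 1)) + u})) +
     ({n : ℕ | ∃ k l, k < s ∧ l < t ∧ n = (s - 1 - k) + (t * s + lam) * l} ∪
      {n : ℕ | ∃ r, r < z ∧ n = t * s + (t * s + lam) * (t - 1) + r})).ncard
      = (min ((z - 1) / lam) (t - 1) + 2) * (t * s) +
        (t * s + lam) * (t - 1) + 2 * z - 1 := by
  obtain ⟨ts, hts⟩ : ∃ x, t * s = x := ⟨_, rfl⟩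
  rw [hts] at hz ⊢
  obtain ⟨q, hqdef⟩ : ∃ x, min ((z - 1) / lam) (t - 1) = x := ⟨_, rfl⟩
  rw [hqdef]
  obtain ⟨θ, hθ⟩ : ∃ x, ts + lam = x := ⟨_, rfl⟩
  rw [hθ]
  have hq1 : 1 ≤ q := by
    rw [← hqdef]; exact le_min ((Nat.one_le_div_iff hlam1).mpr hlam2) (by omega)
  have hqt : q ≤ t - 1 := by rw [← hqdef]; exact min_le_right _ _
  have hql : q * lam ≤ z - 1 := by
    rw [← hqdef]
    exact le_trans (Nat.mul_le_mul_right lam (min_le_left _ _)) (Nat.div_mul_le_self _ _)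
  clear hqdef
  obtain ⟨Θt, hΘt⟩ : ∃ x, θ * (t - 1) = x := ⟨_, rfl⟩
  obtain ⟨Θq, hΘq⟩ : ∃ x, θ * q = x := ⟨_, rfl⟩
  obtain ⟨LQ, hLQ⟩ : ∃ x, q * lam = x := ⟨_, rfl⟩
  obtain ⟨QT, hQT⟩ : ∃ x, q * ts = x := ⟨_, rfl⟩
  rw [hΘt, hΘq, hLQ]
  have hQ2 : (q + 2) * ts = QT + 2 * ts := by rw [← hQT]; ring
  rw [hQ2]
  have hθpos : 0 < θ := by omega
  have h2ts : 2 ≤ ts := by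
    rw [← hts]
    calc 2 = 2 * 1 := by norm_num
      _ ≤ t * s := Nat.mul_le_mul ht hs
  have hsts : s ≤ ts := by
    rw [← hts]; exact Nat.le_mul_of_pos_left s (by omega)
  have hΘqt : Θq ≤ Θt := by rw [← hΘt, ← hΘq]; exact Nat.mul_le_mul_left θ hqt
  have hsplit : Θq = QT + LQ := by rw [← hΘq, ← hQT, ← hLQ, ← hθ]; ring
  have hLQz : LQ ≤ z - 1 := by rw [← hLQ]; exact hql
  have hPCA : {n : ℕ | ∃ j i, j < s ∧ i < t ∧ n = j + s * i} = Set.Iio ts := by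
    ext m
    simp only [Set.mem_setOf_eq, Set.mem_Iio]
    constructor
    · rintro ⟨j, i, hj, hi, rfl⟩
      obtain ⟨si, hsi⟩ : ∃ x, s * i = x := ⟨_, rfl⟩
      have h1 : si + s ≤ ts := by
        rw [← hts, ← hsi]
        calc s * i + s = s * (i + 1) := by ring
          _ ≤ s * t := Nat.mul_le_mul_left s hi
          _ = t * s := mul_comm _ _
      rw [hsi]; omega
    · intro hm
      exact ⟨m % s, m / s, Nat.mod_lt _ (by omega),
        (Nat.div_lt_iff_lt_mul (by omega)).mpr (by rw [hts]; exact hm),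
        (Nat.mod_add_div m s).symm⟩
  rw [hPCA]
  have hcard : (Set.Iic (QT + 2 * ts + Θt + 2 * z - 2)).ncard = QT + 2 * ts + Θt + 2 * z - 1 := by
    rw [← Finset.coe_Iic, Set.ncard_coe_finset, Nat.card_Iic]; omega
  rw [← hcard]
  congr 1
  ext n
  simp only [Set.mem_add, Set.mem_union, Set.mem_setOf_eq, Set.mem_Iio, Set.mem_Iic]
  constructor
  · rintro ⟨a, ha, b, hb, rfl⟩
    have hA : a ≤ Θq + ts + (z - 1 - LQ) := by
      clear hb
      rcases ha with h | ⟨l, w, hl, hw, rfl⟩ | ⟨u, hu, rfl⟩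
      · omega
      · obtain ⟨X, hX⟩ : ∃ x, θ * l = x := ⟨_, rfl⟩
        have h1 : X + θ ≤ Θq := by
          rw [← hX, ← hΘq]
          calc θ * l + θ = θ * (l + 1) := by ring
            _ ≤ θ * q := Nat.mul_le_mul_left θ hl
        rw [hX]; omega
      · omega
    have hB : b ≤ Θt + ts + (z - 1) := by
      clear ha
      rcases hb with ⟨k, l, hk, hl, rfl⟩ | ⟨r, hr, rfl⟩
      · obtain ⟨X, hX⟩ : ∃ x, θ * l = x := ⟨_, rfl⟩
        have h1 : X ≤ Θt := by
          rw [← hX, ← hΘt]; exact Nat.mul_le_mul_left θ (by omega)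
        rw [hX]; omega
      · omega
    clear ha hb
    omega
  · intro hn
    by_cases hbig : n < Θt + θ
    · obtain ⟨D, hD⟩ : ∃ x, n / θ = x := ⟨_, rfl⟩
      obtain ⟨R, hR⟩ : ∃ x, n % θ = x := ⟨_, rfl⟩
      obtain ⟨TL, hTL⟩ : ∃ x, θ * D = x := ⟨_, rfl⟩
      have hmod : TL + R = n := by rw [← hTL, ← hD, ← hR]; exact Nat.div_add_mod n θ
      have hrθ : R < θ := by rw [← hR]; exact Nat.mod_lt _ hθpos
      have hDt : D < t := by
        rw [← hD]
        apply (Nat.div_lt_iff_lt_mul hθpos).mpr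
        calc n < Θt + θ := hbig
          _ ≤ t * θ := by
            rw [← hΘt]
            have h1 : θ * (t - 1) + θ = θ * (t - 1 + 1) := by ring
            rw [h1, show t - 1 + 1 = t by omega, mul_comm]
      by_cases hsm : R < ts
      · refine ⟨R, Or.inl hsm, TL, Or.inl ⟨s - 1, D, by omega, hDt, ?_⟩, by omega⟩
        rw [Nat.sub_self, Nat.zero_add, hTL]
      · refine ⟨ts + (R - ts), Or.inr (Or.inl ⟨0, R - ts, hq1, by omega, ?_⟩),
          TL, Or.inl ⟨s - 1, D, by omega, hDt, ?_⟩, by omega⟩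
        · rw [Nat.mul_zero, Nat.add_zero]
        · rw [Nat.sub_self, Nat.zero_add, hTL]
    · obtain ⟨m', hm'⟩ : ∃ x, n - Θt - ts - (z - 1) = x := ⟨_, rfl⟩
      by_cases hmz : n < Θt + ts + z
      · exact ⟨0, Or.inl (by omega), ts + Θt + (n - Θt - ts),
          Or.inr ⟨n - Θt - ts, by omega, by omega⟩, by omega⟩
      · have hm'1 : 1 ≤ m' := by omega
        have hm'A : m' ≤ Θq + ts + (z - 1 - LQ) := by omega
        have hbstep : ∀ a : ℕ, m' ≤ a → a ≤ m' + ts →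
            ∃ y, ((∃ k l, k < s ∧ l < t ∧ y = s - 1 - k + θ * l) ∨
                  ∃ r, r < z ∧ y = ts + Θt + r) ∧ a + y = n := by
          intro a h1 h2
          exact ⟨ts + Θt + (n - ts - Θt - a),
            Or.inr ⟨n - ts - Θt - a, by omega, rfl⟩, by omega⟩
        obtain ⟨D, hD⟩ : ∃ x, m' / θ = x := ⟨_, rfl⟩
        obtain ⟨PD, hPD⟩ : ∃ x, θ * D = x := ⟨_, rfl⟩
        have hPD1 : PD ≤ m' := by
          rw [← hPD, ← hD]; exact Nat.mul_div_le m' θ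
        have hPD2 : m' < PD + θ := by
          rw [← hPD, ← hD]
          conv_lhs => rw [← Nat.div_add_mod m' θ]
          exact Nat.add_lt_add_left (Nat.mod_lt _ hθpos) _
        by_cases hDq : D < q
        · by_cases hin : m' ≤ PD + ts
          · obtain ⟨y, hy, hsum⟩ := hbstep (ts + PD) (by omega) (by omega)
            exact ⟨ts + PD, Or.inr (Or.inl ⟨D, 0, hDq, hlam1, by rw [hPD]; omega⟩), y, hy, hsum⟩
          · obtain ⟨y, hy, hsum⟩ := hbstep m' (le_refl _) (by omega)
            exact ⟨m', Or.inr (Or.inl ⟨D, m' - ts - PD, hDq, by omega, by rw [hPD]; omega⟩),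
              y, hy, hsum⟩
        · have hΘqPD : Θq ≤ PD := by
            rw [← hΘq, ← hPD]; exact Nat.mul_le_mul_left θ (by omega)
          by_cases hin : m' ≤ Θq + ts
          · obtain ⟨y, hy, hsum⟩ := hbstep (ts + Θq) (by omega) (by omega)
            exact ⟨ts + Θq, Or.inr (Or.inr ⟨0, by omega, by omega⟩), y, hy, hsum⟩
          · obtain ⟨y, hy, hsum⟩ := hbstep m' (le_refl _) (by omega)
            exact ⟨m', Or.inr (Or.inr ⟨m' - ts - Θq, by omega, by omega⟩), y, hy, hsum⟩
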